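/- Let M > 0. There is a constant C > 0 depending only on M (for instance C = M/(2π)) such that for every δ > 0, every integer j ≥ 1 and every x ∈ ℝ³ with x ≠ 0 and |x₃| ≤ M(x₁² + x₂²), one has |Φ₀(x, x_j) − Φ₀(x, y_j)| ≤ C; that is, the differences Φ₀(·, x_j) − Φ₀(·, y_j) of the exterior and interior point-source kernels are uniformly bounded on the boundary surface, uniformly in j. -/

import Mathlib

noncomputable section

open Real

/-- Euclidean space `ℝ³`. -/
abbrev E3 := EuclideanSpace ℝ (Fin 3)

/-- The fundamental solution `Φ₀(x,y) = 1/(4π|x−y|)` of the Laplacian in `ℝ³`. -/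
def Phi0 (x y : E3) : ℝ := 1 / (4 * Real.pi * ‖x - y‖)

/-- The exterior source points `x_j = (0,0,δ/j)`. -/
def xj (δ : ℝ) (j : ℕ) : E3 := EuclideanSpace.single (2 : Fin 3) (δ / j)

/-- The interior source points `y_j = (0,0,−δ/j)`. -/
def yj (δ : ℝ) (j : ℕ) : E3 := EuclideanSpace.single (2 : Fin 3) (-(δ / j))

set_option maxHeartbeats 1600000 in
/-- Let `M > 0`.  There is a constant `C > 0` depending only on `M` such that
for every `δ > 0`, every integer `j ≥ 1` and every `x ∈ ℝ³` with `x ≠ 0` and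
`|x₃| ≤ M(x₁² + x₂²)`, one has `|Φ₀(x, x_j) − Φ₀(x, y_j)| ≤ C`; i.e. the differences
of the exterior and interior point-source kernels are uniformly bounded on the boundary
surface, uniformly in `j`. -/
theorem point_source_difference_bounded (M : ℝ) (hM : 0 < M) :
    ∃ C > 0, ∀ δ : ℝ, 0 < δ → ∀ j : ℕ, 1 ≤ j → ∀ x : E3, x ≠ 0 →
      |x 2| ≤ M * ((x 0) ^ 2 + (x 1) ^ 2) →
      |Phi0 x (xj δ j) - Phi0 x (yj δ j)| ≤ C := by
  have hpi := Real.pi_pos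
  refine ⟨M / (2 * Real.pi), by positivity, ?_⟩
  intro δ hδ j hj x hx hM3
  set a : ℝ := δ / j with ha
  have hj0 : (0:ℝ) < j := by exact_mod_cast Nat.lt_of_lt_of_le Nat.zero_lt_one hj
  have ha0 : 0 < a := div_pos hδ hj0
  set s : ℝ := (x 0) ^ 2 + (x 1) ^ 2 with hs
  have hs0 : 0 < s := by
    rcases lt_or_eq_of_le (by positivity : (0:ℝ) ≤ s) with h | h
    · exact h
    · exfalso
      apply hx
      have h0 : x 0 = 0 := by nlinarith [sq_nonneg (x 0), sq_nonneg (x 1)]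
      have h1 : x 1 = 0 := by nlinarith [sq_nonneg (x 0), sq_nonneg (x 1)]
      have h2 : x 2 = 0 := by
        have hle : |x 2| ≤ 0 := by nlinarith
        simpa [abs_nonpos_iff] using hle
      ext i
      fin_cases i <;> simp [h0, h1, h2]
  set p : ℝ := ‖x - xj δ j‖ with hp
  set q : ℝ := ‖x - yj δ j‖ with hq
  have hp2 : p ^ 2 = s + (x 2 - a) ^ 2 := by
    rw [hp, EuclideanSpace.norm_eq, Real.sq_sqrt (by positivity)]
    simp [Fin.sum_univ_three, xj, EuclideanSpace.single_apply, sq_abs, hs, ← ha]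
  have hq2 : q ^ 2 = s + (x 2 + a) ^ 2 := by
    rw [hq, EuclideanSpace.norm_eq, Real.sq_sqrt (by positivity)]
    simp [Fin.sum_univ_three, yj, EuclideanSpace.single_apply, sq_abs, hs, ← ha]
  have hpnn : 0 ≤ p := norm_nonneg _
  have hqnn : 0 ≤ q := norm_nonneg _
  have hp0 : 0 < p := by nlinarith [sq_nonneg (x 2 - a)]
  have hq0 : 0 < q := by nlinarith [sq_nonneg (x 2 + a)]
  -- s ≤ p * q
  have hsp : Real.sqrt s ≤ p := by
    have h := Real.sqrt_le_sqrt (show s ≤ p ^ 2 by linarith [sq_nonneg (x 2 - a), hp2])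
    rwa [Real.sqrt_sq hpnn] at h
  have hsq : Real.sqrt s ≤ q := by
    have h := Real.sqrt_le_sqrt (show s ≤ q ^ 2 by linarith [sq_nonneg (x 2 + a), hq2])
    rwa [Real.sqrt_sq hqnn] at h
  have hspq : s ≤ p * q := by
    calc s = Real.sqrt s * Real.sqrt s := (Real.mul_self_sqrt hs0.le).symm
      _ ≤ p * q := mul_le_mul hsp hsq (Real.sqrt_nonneg _) hpnn
  -- p + q ≥ 2a
  have habsp : |x 2 - a| ≤ p := by
    have h := Real.sqrt_le_sqrt (show (x 2 - a) ^ 2 ≤ p ^ 2 by linarith [hp2, hs0.le])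
    rwa [Real.sqrt_sq_eq_abs, Real.sqrt_sq hpnn] at h
  have habsq : |x 2 + a| ≤ q := by
    have h := Real.sqrt_le_sqrt (show (x 2 + a) ^ 2 ≤ q ^ 2 by linarith [hq2, hs0.le])
    rwa [Real.sqrt_sq_eq_abs, Real.sqrt_sq hqnn] at h
  have hsum : 2 * a ≤ p + q := by
    have h1 := neg_abs_le (x 2 - a)
    have h2 := le_abs_self (x 2 + a)
    linarith
  -- |q - p| * (p + q) = 4 * a * |x 2|
  have hkey : |q - p| * (p + q) = 4 * a * |x 2| := by
    have : (q - p) * (p + q) = 4 * a * (x 2) := by linear_combination hq2 - hp2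
    calc |q - p| * (p + q) = |(q - p) * (p + q)| := by
          rw [abs_mul, abs_of_nonneg (by linarith : (0:ℝ) ≤ p + q)]
      _ = |4 * a * (x 2)| := by rw [this]
      _ = 4 * a * |x 2| := by
          rw [abs_mul, abs_of_nonneg (by linarith : (0:ℝ) ≤ 4 * a)]
  have hqp : |q - p| ≤ 2 * |x 2| := by
    have hmul : |q - p| * (2 * a) ≤ |q - p| * (p + q) :=
      mul_le_mul_of_nonneg_left hsum (abs_nonneg _)
    rw [hkey] at hmul
    have h2a : (0:ℝ) < 2 * a := by linarith
    refine le_of_mul_le_mul_right ?_ h2a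
    linarith
  -- rewrite the difference
  have hdiff : Phi0 x (xj δ j) - Phi0 x (yj δ j) = (q - p) / (4 * Real.pi * p * q) := by
    rw [Phi0, Phi0, ← hp, ← hq]
    field_simp
  rw [hdiff, abs_div, abs_of_pos (by positivity : (0:ℝ) < 4 * Real.pi * p * q)]
  rw [div_le_div_iff₀ (by positivity) (by positivity)]
  have hx2 : |x 2| ≤ M * s := hM3
  have h1 : |q - p| ≤ 2 * M * (p * q) := by
    calc |q - p| ≤ 2 * |x 2| := hqp
      _ ≤ 2 * (M * s) := by linarith
      _ ≤ 2 * M * (p * q) := by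
          have := mul_le_mul_of_nonneg_left hspq (by positivity : (0:ℝ) ≤ 2 * M)
          linarith
  have h2 := mul_le_mul_of_nonneg_right h1 (le_of_lt (by positivity : (0:ℝ) < 2 * Real.pi))
  linarith [h2]
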